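/- Define, for (s,t) ∈ (0,∞)² and (x,y) ∈ ℝ², the correlation kernel of the Dyson model started from the integer-lattice configuration: K^{ℤ}(s,x;t,y) = K_sin(s,x;t,y) + ∑_{n ∈ ℤ∖{0}} e^{2πixn − 2π²sn²} ∫_0^1 e^{π²u²(t−s)/2} cos[πu((y−x) − 2πi s n)] du. Then for every fixed (s,t) ∈ (0,∞)² and (x,y) ∈ ℝ², lim_{u→∞} K^{ℤ}(u+s, x; u+t, y) = K_sin(s,x;t,y); i.e., the correction term ∑_{n≠0} e^{2πixn − 2π²(u+s)n²} ∫_0^1 e^{π²v²(t−s)/2} cos[πv((y−x) − 2πi(u+s)n)] dv tends to 0 as u → ∞. -/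

import Mathlib

open Real

/-- The extended sine kernel `K_sin(s,x;t,y)` (as a complex number; it is real-valued). -/
noncomputable def extendedSineKernel (s x t y : ℝ) : ℂ :=
  if t > s then
    ∫ u in (0 : ℝ)..1, Complex.exp ((Real.pi ^ 2 * u ^ 2 * (t - s) / 2 : ℝ) : ℂ)
      * Complex.cos ((Real.pi * u * (y - x) : ℝ) : ℂ)
  else if t = s then
    Complex.sin ((Real.pi * (y - x) : ℝ) : ℂ) / ((Real.pi * (y - x) : ℝ) : ℂ)
  else
    -∫ u in Set.Ioi (1 : ℝ), Complex.exp ((Real.pi ^ 2 * u ^ 2 * (t - s) / 2 : ℝ) : ℂ)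
      * Complex.cos ((Real.pi * u * (y - x) : ℝ) : ℂ)

/-- The correlation kernel `K^ℤ(s,x;t,y)` of the Dyson model started from the
configuration in which every integer point is occupied by one particle:
`K^ℤ = K_sin + ∑_{n ≠ 0} e^{2πixn − 2π²sn²} ∫_0^1 e^{π²u²(t−s)/2}
  cos[πu((y−x) − 2πi s n)] du`. -/
noncomputable def dysonLatticeKernel (s x t y : ℝ) : ℂ :=
  extendedSineKernel s x t y
    + ∑' n : ℤ, if n = 0 then 0 else
        Complex.exp (2 * (Real.pi : ℂ) * Complex.I * (x : ℂ) * (n : ℂ)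
            - 2 * (Real.pi : ℂ) ^ 2 * (s : ℂ) * (n : ℂ) ^ 2)
          * ∫ u in (0 : ℝ)..1,
              Complex.exp ((Real.pi ^ 2 * u ^ 2 * (t - s) / 2 : ℝ) : ℂ)
                * Complex.cos ((Real.pi : ℂ) * (u : ℂ)
                    * (((y : ℂ) - (x : ℂ)) - 2 * (Real.pi : ℂ) * Complex.I * (s : ℂ) * (n : ℂ)))

lemma norm_cos_le_exp_abs_im (z : ℂ) : ‖Complex.cos z‖ ≤ Real.exp |z.im| := by
  rw [Complex.cos]
  have h1 : ‖Complex.exp (z * Complex.I)‖ ≤ Real.exp |z.im| := by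
    rw [Complex.norm_exp]
    apply Real.exp_le_exp.2
    simp [Complex.mul_re]
    exact neg_le_abs z.im
  have h2 : ‖Complex.exp (-z * Complex.I)‖ ≤ Real.exp |z.im| := by
    rw [Complex.norm_exp]
    apply Real.exp_le_exp.2
    simp [Complex.mul_re]
    exact le_abs_self z.im
  calc ‖(Complex.exp (z * Complex.I) + Complex.exp (-z * Complex.I)) / 2‖
      = ‖Complex.exp (z * Complex.I) + Complex.exp (-z * Complex.I)‖ / 2 := by
        rw [norm_div]; norm_num
    _ ≤ (‖Complex.exp (z * Complex.I)‖ + ‖Complex.exp (-z * Complex.I)‖) / 2 := by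
        gcongr; exact norm_add_le _ _
    _ ≤ Real.exp |z.im| := by linarith

lemma summable_exp_neg_abs_int (c : ℝ) (hc : 0 < c) :
    Summable fun n : ℤ => Real.exp (-c * |(n : ℝ)|) := by
  have hr1 : Real.exp (-c) < 1 := by
    rw [Real.exp_lt_one_iff]; linarith
  have h : ∀ n : ℤ, Real.exp (-c * |(n : ℝ)|) = Real.exp (-c) ^ n.natAbs := by
    intro n
    have hn : ((n.natAbs : ℕ) : ℝ) = |(n : ℝ)| := by
      rw [Nat.cast_natAbs, Int.cast_abs]
    rw [← Real.exp_nat_mul, hn, mul_comm]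
  simp only [h]
  have hgeo : Summable fun k : ℕ => Real.exp (-c) ^ k :=
    summable_geometric_of_lt_one (Real.exp_nonneg _) hr1
  apply Summable.of_nat_of_neg
  · simpa [Int.natAbs_natCast] using hgeo
  · simpa [Int.natAbs_neg, Int.natAbs_natCast] using hgeo

lemma term_bound (d x y s σ : ℝ) (hs : 0 < s) (hσ : s ≤ σ) (n : ℤ) :
    ‖(if n = 0 then (0:ℂ) else
        Complex.exp (2 * (Real.pi : ℂ) * Complex.I * (x : ℂ) * (n : ℂ)
            - 2 * (Real.pi : ℂ) ^ 2 * (σ : ℂ) * (n : ℂ) ^ 2)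
          * ∫ u in (0 : ℝ)..1,
              Complex.exp ((Real.pi ^ 2 * u ^ 2 * d / 2 : ℝ) : ℂ)
                * Complex.cos ((Real.pi : ℂ) * (u : ℂ)
                    * (((y : ℂ) - (x : ℂ)) - 2 * (Real.pi : ℂ) * Complex.I * (σ : ℂ) * (n : ℂ))))‖
      ≤ Real.exp (Real.pi ^ 2 * |d| / 2) * Real.exp (2 * Real.pi ^ 2 * s) / (2 * Real.pi ^ 2 * σ)
          * Real.exp (-(2 * Real.pi ^ 2 * s) * |(n : ℝ)|) := by
  have hσ0 : 0 < σ := lt_of_lt_of_le hs hσ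
  have hπ : 0 < Real.pi := Real.pi_pos
  set A : ℝ := 2 * Real.pi ^ 2 with hA
  have hApos : 0 < A := by positivity
  by_cases hn : n = 0
  · rw [if_pos hn]
    simp only [norm_zero]
    positivity
  rw [if_neg hn]
  set m : ℝ := |(n : ℝ)| with hm
  have hm1 : (1 : ℝ) ≤ m := by
    rw [hm, ← Int.cast_abs]
    exact_mod_cast Int.one_le_abs hn
  set a : ℝ := A * σ * m with ha
  have hapos : 0 < a := by positivity
  set M : ℝ := Real.pi ^ 2 * |d| / 2 with hM
  -- norm of exp factor
  have h1 : ‖Complex.exp (2 * (Real.pi : ℂ) * Complex.I * (x : ℂ) * (n : ℂ)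
      - 2 * (Real.pi : ℂ) ^ 2 * (σ : ℂ) * (n : ℂ) ^ 2)‖ = Real.exp (-(A * σ * ((n : ℝ)) ^ 2)) := by
    have heq : (2 * (Real.pi : ℂ) * Complex.I * (x : ℂ) * (n : ℂ)
        - 2 * (Real.pi : ℂ) ^ 2 * (σ : ℂ) * (n : ℂ) ^ 2)
        = ((-(A * σ * ((n : ℝ)) ^ 2) : ℝ) : ℂ) + ((2 * Real.pi * x * (n : ℝ) : ℝ) : ℂ) * Complex.I := by
      rw [hA]
      push_cast
      ring
    rw [heq, Complex.exp_add, norm_mul,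
      Complex.norm_exp_ofReal, Complex.norm_exp_ofReal_mul_I, mul_one]
  -- bound on the integral
  have h2 : ‖∫ u in (0 : ℝ)..1,
      Complex.exp ((Real.pi ^ 2 * u ^ 2 * d / 2 : ℝ) : ℂ)
        * Complex.cos ((Real.pi : ℂ) * (u : ℂ)
            * (((y : ℂ) - (x : ℂ)) - 2 * (Real.pi : ℂ) * Complex.I * (σ : ℂ) * (n : ℂ)))‖
      ≤ Real.exp (a + M) / a := by
    have hbound : ∀ᵐ v ∂(MeasureTheory.volume.restrict (Set.uIoc (0:ℝ) 1)),
        ‖Complex.exp ((Real.pi ^ 2 * v ^ 2 * d / 2 : ℝ) : ℂ)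
          * Complex.cos ((Real.pi : ℂ) * (v : ℂ)
              * (((y : ℂ) - (x : ℂ)) - 2 * (Real.pi : ℂ) * Complex.I * (σ : ℂ) * (n : ℂ)))‖
          ≤ Real.exp (a * v + M) := by
      refine (MeasureTheory.ae_restrict_mem measurableSet_uIoc).mono fun v hv => ?_
      rw [Set.uIoc_of_le (by norm_num : (0:ℝ) ≤ 1)] at hv
      obtain ⟨hv0, hv1⟩ := hv
      have hv2 : v ^ 2 ≤ 1 := by nlinarith
      have hcosarg : ((Real.pi : ℂ) * (v : ℂ)
          * (((y : ℂ) - (x : ℂ)) - 2 * (Real.pi : ℂ) * Complex.I * (σ : ℂ) * (n : ℂ)))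
          = ((Real.pi * v * (y - x) : ℝ) : ℂ)
            + ((-(A * σ * (n : ℝ) * v) : ℝ) : ℂ) * Complex.I := by
        rw [hA]; push_cast; ring
      have him : ((Real.pi : ℂ) * (v : ℂ)
          * (((y : ℂ) - (x : ℂ)) - 2 * (Real.pi : ℂ) * Complex.I * (σ : ℂ) * (n : ℂ))).im
          = -(A * σ * (n : ℝ) * v) := by
        rw [hcosarg]; simp
      rw [norm_mul]
      have hE : ‖Complex.exp ((Real.pi ^ 2 * v ^ 2 * d / 2 : ℝ) : ℂ)‖
          = Real.exp (Real.pi ^ 2 * v ^ 2 * d / 2) := by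
        rw [Complex.norm_exp_ofReal]
      have hcos := norm_cos_le_exp_abs_im ((Real.pi : ℂ) * (v : ℂ)
          * (((y : ℂ) - (x : ℂ)) - 2 * (Real.pi : ℂ) * Complex.I * (σ : ℂ) * (n : ℂ)))
      rw [him] at hcos
      have habs : |(-(A * σ * (n : ℝ) * v))| = a * v := by
        rw [abs_neg, abs_mul, abs_mul, abs_mul, ha, hm,
          abs_of_pos hApos, abs_of_pos hσ0, abs_of_nonneg hv0.le]
      rw [habs] at hcos
      rw [hE]
      refine le_trans (mul_le_mul_of_nonneg_left hcos (Real.exp_nonneg _)) ?_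
      rw [← Real.exp_add, Real.exp_le_exp, hM]
      have key : v ^ 2 * d ≤ |d| := by
        nlinarith [mul_nonneg (sq_nonneg v) (sub_nonneg.2 (le_abs_self d)),
          mul_nonneg (sub_nonneg.2 hv2) (abs_nonneg d)]
      nlinarith [mul_le_mul_of_nonneg_left key (sq_nonneg Real.pi)]
    have hg : IntervalIntegrable (fun v : ℝ => Real.exp (a * v + M))
        MeasureTheory.volume 0 1 := by
      apply Continuous.intervalIntegrable
      continuity
    refine le_trans (intervalIntegral.norm_integral_le_abs_of_norm_le hbound hg) ?_
    have hval : (∫ v in (0:ℝ)..1, Real.exp (a * v + M))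
        = a⁻¹ * (Real.exp (a + M) - Real.exp M) := by
      rw [intervalIntegral.integral_comp_mul_add Real.exp hapos.ne' M]
      rw [integral_exp]
      rw [smul_eq_mul, mul_zero, zero_add, mul_one]
    rw [hval]
    have hnn : 0 ≤ a⁻¹ * (Real.exp (a + M) - Real.exp M) := by
      apply mul_nonneg (inv_nonneg.2 hapos.le)
      have : Real.exp M ≤ Real.exp (a + M) := Real.exp_le_exp.2 (by linarith)
      linarith
    rw [abs_of_nonneg hnn, div_eq_inv_mul]
    gcongr
    have := Real.exp_pos M
    linarith
  -- combine
  rw [norm_mul, h1]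
  refine le_trans (mul_le_mul_of_nonneg_left h2 (Real.exp_nonneg _)) ?_
  have hm2 : ((n : ℝ)) ^ 2 = m ^ 2 := (sq_abs _).symm
  rw [hm2]
  have hstep : Real.exp (-(A * σ * m ^ 2)) * (Real.exp (a + M) / a)
      = Real.exp M * (Real.exp (a - A * σ * m ^ 2) / a) := by
    rw [Real.exp_add, Real.exp_sub, Real.exp_neg]
    field_simp
  rw [hstep]
  have hexp : a - A * σ * m ^ 2 ≤ A * s - A * s * m := by
    rw [ha]
    nlinarith [mul_nonneg (mul_nonneg hApos.le (sub_nonneg.2 hσ))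
        (by nlinarith : (0:ℝ) ≤ m ^ 2 - m),
      mul_nonneg (mul_nonneg hApos.le hs.le) (sq_nonneg (m - 1))]
  have hAσa : A * σ ≤ a := by
    rw [ha]
    exact le_mul_of_one_le_right (mul_pos hApos hσ0).le hm1
  have hdiv : Real.exp (a - A * σ * m ^ 2) / a ≤ Real.exp (A * s - A * s * m) / (A * σ) :=
    div_le_div₀ (Real.exp_pos _).le (Real.exp_le_exp.2 hexp) (mul_pos hApos hσ0) hAσa
  refine le_trans (mul_le_mul_of_nonneg_left hdiv (Real.exp_nonneg _)) ?_
  rw [show A * s - A * s * m = A * s + -(A * s) * m by ring, Real.exp_add]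
  exact le_of_eq (by ring)

/-- Relaxation to the extended sine kernel: for every fixed
`(s,t) ∈ (0,∞)²` and `(x,y) ∈ ℝ²`,
`lim_{u→∞} K^ℤ(u+s, x; u+t, y) = K_sin(s,x;t,y)`. -/
theorem statement_18 (s t x y : ℝ) (hs : 0 < s) (ht : 0 < t) :
    Filter.Tendsto (fun u : ℝ => dysonLatticeKernel (u + s) x (u + t) y)
      Filter.atTop (nhds (extendedSineKernel s x t y)) := by
  have hπ : 0 < Real.pi := Real.pi_pos
  have hesk : ∀ u : ℝ, extendedSineKernel (u + s) x (u + t) y = extendedSineKernel s x t y := by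
    intro u
    simp only [extendedSineKernel, add_lt_add_iff_left, add_right_inj, add_sub_add_left_eq_sub]
  set T : ℝ → ℂ := fun u => ∑' n : ℤ, (if n = 0 then (0:ℂ) else
      Complex.exp (2 * (Real.pi : ℂ) * Complex.I * (x : ℂ) * (n : ℂ)
          - 2 * (Real.pi : ℂ) ^ 2 * ((u + s : ℝ) : ℂ) * (n : ℂ) ^ 2)
        * ∫ v in (0 : ℝ)..1,
            Complex.exp ((Real.pi ^ 2 * v ^ 2 * (t - s) / 2 : ℝ) : ℂ)
              * Complex.cos ((Real.pi : ℂ) * (v : ℂ)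
                  * (((y : ℂ) - (x : ℂ))
                      - 2 * (Real.pi : ℂ) * Complex.I * ((u + s : ℝ) : ℂ) * (n : ℂ)))) with hT
  have hker : ∀ u : ℝ, dysonLatticeKernel (u + s) x (u + t) y
      = extendedSineKernel s x t y + T u := by
    intro u
    rw [dysonLatticeKernel, hesk u, hT]
    simp only [add_sub_add_left_eq_sub]
  have hsumm : Summable fun n : ℤ => Real.exp (-(2 * Real.pi ^ 2 * s) * |(n : ℝ)|) :=
    summable_exp_neg_abs_int _ (by positivity)
  set S : ℝ := ∑' n : ℤ, Real.exp (-(2 * Real.pi ^ 2 * s) * |(n : ℝ)|) with hS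
  set C0 : ℝ := Real.exp (Real.pi ^ 2 * |t - s| / 2) * Real.exp (2 * Real.pi ^ 2 * s)
      / (2 * Real.pi ^ 2) with hC0
  have hbound : ∀ u : ℝ, 0 ≤ u → ‖T u‖ ≤ C0 * S / (u + s) := by
    intro u hu
    have hσ : s ≤ u + s := by linarith
    have key := fun n : ℤ => term_bound (t - s) x y s (u + s) hs hσ n
    refine le_trans (tsum_of_norm_bounded (hsumm.hasSum.mul_left
      (Real.exp (Real.pi ^ 2 * |t - s| / 2) * Real.exp (2 * Real.pi ^ 2 * s)
        / (2 * Real.pi ^ 2 * (u + s)))) key) ?_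
    exact le_of_eq (by rw [hC0, hS, ← div_div]; ring)
  have hbnd_tendsto : Filter.Tendsto (fun u : ℝ => C0 * S / (u + s))
      Filter.atTop (nhds 0) :=
    Filter.Tendsto.div_atTop tendsto_const_nhds
      (Filter.tendsto_atTop_add_const_right _ s Filter.tendsto_id)
  have hTz : Filter.Tendsto T Filter.atTop (nhds 0) :=
    squeeze_zero_norm' (Filter.eventually_atTop.2 ⟨0, hbound⟩) hbnd_tendsto
  have heq : (fun u : ℝ => dysonLatticeKernel (u + s) x (u + t) y)
      = fun u => extendedSineKernel s x t y + T u := funext hker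
  rw [heq]
  simpa using tendsto_const_nhds.add hTz
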